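/- Let A ⊆ ℝ² be a convex body and H = ℝ·e₀ the horizontal axis. Suppose A is translated so that |H ∩ A| = sup{|(x + H) ∩ A| : x ∈ ℝ²}, i.e., the horizontal slice through the origin has maximal length. Then there exists a linear map π : ℝ² → ℝ² with π(ℝ²) = H and π(A) = H ∩ A. -/

import Mathlib

open MeasureTheory

def IsConvexBody {E : Type*} [NormedAddCommGroup E] [NormedSpace ℝ E] (A : Set E) : Prop :=
  Convex ℝ A ∧ IsCompact A ∧ (interior A).Nonempty

theorem oblique_projection_onto_maximal_slice (A : Set (ℝ × ℝ))
    (hA : IsConvexBody A)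
    (hmax : ∀ c : ℝ, volume {t : ℝ | (t, c) ∈ A} ≤ volume {t : ℝ | (t, (0:ℝ)) ∈ A}) :
    ∃ π : (ℝ × ℝ) →ₗ[ℝ] (ℝ × ℝ),
      Set.range π = {p : ℝ × ℝ | p.2 = 0} ∧
      π '' A = {p : ℝ × ℝ | p.2 = 0} ∩ A := by
  obtain ⟨hconv, hcomp, hint⟩ := hA
  -- convexity of slices
  have hScvx : ∀ c : ℝ, Convex ℝ {t : ℝ | (t, c) ∈ A} := by
    intro c u hu v hv s t hs ht hst
    have h := hconv hu hv hs ht hst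
    have e : s • ((u:ℝ), c) + t • (v, c) = (s • u + t • v, c) := by
      simp [Prod.ext_iff, smul_eq_mul]
      linear_combination c * hst
    rw [e] at h
    exact h
  -- segments
  have hseg : ∀ (px py qx qy : ℝ), (px,py) ∈ A → (qx,qy) ∈ A → ∀ θ : ℝ, 0 ≤ θ → θ ≤ 1 →
      ((1-θ)*px + θ*qx, (1-θ)*py + θ*qy) ∈ A := by
    intro px py qx qy hp hq θ h0 h1
    have h := hconv hp hq (by linarith : (0:ℝ) ≤ 1-θ) h0 (by ring)
    have e : (1-θ) • ((px:ℝ), py) + θ • (qx, qy) = ((1-θ)*px + θ*qx, (1-θ)*py + θ*qy) := by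
      simp [Prod.ext_iff, smul_eq_mul]
    rw [e] at h
    exact h
  -- compactness of the zero slice
  have hSc : IsCompact {t : ℝ | (t,(0:ℝ)) ∈ A} := by
    apply IsCompact.of_isClosed_subset (hcomp.image continuous_fst)
    · exact IsClosed.preimage (continuous_id.prodMk continuous_const) hcomp.isClosed
    · exact fun t ht => ⟨(t,0), ht, rfl⟩
  -- interior point and ball
  obtain ⟨z, hz⟩ := hint
  obtain ⟨ε, hε, hball⟩ := Metric.isOpen_iff.1 isOpen_interior z hz
  -- nonemptiness of the zero slice
  have hne : {t : ℝ | (t,(0:ℝ)) ∈ A}.Nonempty := by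
    have hsub : Set.Ioo (z.1-ε) (z.1+ε) ⊆ {t : ℝ | (t, z.2) ∈ A} := by
      intro t ht
      apply interior_subset (hball ?_)
      rw [Metric.mem_ball, Prod.dist_eq]
      simp only [Real.dist_eq]
      rw [show z = (z.1, z.2) from rfl]
      simp only []
      have h1 : |t - z.1| < ε := by
        rw [abs_lt]; constructor <;> [linarith [ht.1]; linarith [ht.2]]
      have h2 : |z.2 - z.2| = 0 := by simp
      calc max |t - z.1| |z.2 - z.2| ≤ max |t - z.1| 0 := by rw [h2]
        _ = |t - z.1| := max_eq_left (abs_nonneg _)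
        _ < ε := h1
    by_contra h
    rw [Set.not_nonempty_iff_eq_empty] at h
    have h0 := hmax z.2
    rw [h, measure_empty, nonpos_iff_eq_zero] at h0
    have hpos : 0 < volume {t : ℝ | (t, z.2) ∈ A} := by
      calc (0:ENNReal) < ENNReal.ofReal (z.1+ε - (z.1-ε)) := by
            rw [ENNReal.ofReal_pos]; linarith
        _ = volume (Set.Ioo (z.1-ε) (z.1+ε)) := (Real.volume_Ioo).symm
        _ ≤ volume {t : ℝ | (t, z.2) ∈ A} := measure_mono hsub
    rw [h0] at hpos
    exact lt_irrefl _ hpos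
  set a := sInf {t : ℝ | (t,(0:ℝ)) ∈ A} with ha_def
  set b := sSup {t : ℝ | (t,(0:ℝ)) ∈ A} with hb_def
  have ha : a ∈ {t : ℝ | (t,(0:ℝ)) ∈ A} := hSc.sInf_mem hne
  have hb : b ∈ {t : ℝ | (t,(0:ℝ)) ∈ A} := hSc.sSup_mem hne
  have hab : a ≤ b := csInf_le_csSup hne hSc.bddBelow hSc.bddAbove
  have hS0eq : {t : ℝ | (t,(0:ℝ)) ∈ A} = Set.Icc a b := by
    apply Set.Subset.antisymm
    · intro t ht
      exact ⟨csInf_le hSc.bddBelow ht, le_csSup hSc.bddAbove ht⟩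
    · exact (hScvx 0).ordConnected.out ha hb
  have haA : ((a:ℝ), (0:ℝ)) ∈ A := ha
  have hbA : ((b:ℝ), (0:ℝ)) ∈ A := hb
  -- the key slice-length bound
  have key : ∀ (c u v : ℝ), (u, c) ∈ A → (v, c) ∈ A → v - u ≤ b - a := by
    intro c u v hu hv
    rcases le_or_gt v u with h | h
    · linarith
    · have hsub : Set.Icc u v ⊆ {t : ℝ | (t, c) ∈ A} := (hScvx c).ordConnected.out hu hv
      have h1 : ENNReal.ofReal (v - u) ≤ ENNReal.ofReal (b - a) := by
        calc ENNReal.ofReal (v-u) = volume (Set.Icc u v) := (Real.volume_Icc).symm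
          _ ≤ volume {t : ℝ | (t,c) ∈ A} := measure_mono hsub
          _ ≤ volume {t : ℝ | (t,(0:ℝ)) ∈ A} := hmax c
          _ = ENNReal.ofReal (b - a) := by rw [hS0eq, Real.volume_Icc]
      exact (ENNReal.ofReal_le_ofReal_iff (by linarith)).1 h1
  -- bound sets for the slope
  set L := {r : ℝ | ∃ p : ℝ × ℝ, p ∈ A ∧ ((0 < p.2 ∧ r = (p.1 - b)/p.2) ∨ (p.2 < 0 ∧ r = (p.1 - a)/p.2))} with hL_def
  set U := {r : ℝ | ∃ p : ℝ × ℝ, p ∈ A ∧ ((0 < p.2 ∧ r = (p.1 - a)/p.2) ∨ (p.2 < 0 ∧ r = (p.1 - b)/p.2))} with hU_def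
  -- every lower bound is at most every upper bound
  have hLU : ∀ r ∈ L, ∀ s ∈ U, r ≤ s := by
    rintro r ⟨⟨x₁, y₁⟩, hp, hcase₁⟩ s ⟨⟨x₂, y₂⟩, hq, hcase₂⟩
    simp only at hcase₁ hcase₂
    rcases hcase₁ with ⟨hy₁, rfl⟩ | ⟨hy₁, rfl⟩ <;> rcases hcase₂ with ⟨hy₂, rfl⟩ | ⟨hy₂, rfl⟩
    · -- Case A : y₁ > 0, y₂ > 0 : (x₁-b)/y₁ ≤ (x₂-a)/y₂
      rw [div_le_div_iff₀ hy₁ hy₂]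
      rcases le_total y₁ y₂ with hle | hle
      · set θ := y₁/y₂ with hθ_def
        have hθ0 : 0 ≤ θ := div_nonneg hy₁.le hy₂.le
        have hθ1 : θ ≤ 1 := (div_le_one hy₂).2 hle
        have hθy : θ * y₂ = y₁ := div_mul_cancel₀ y₁ hy₂.ne'
        have hP := hseg a 0 x₂ y₂ haA hq θ hθ0 hθ1
        have e0 : (1-θ)*(0:ℝ) + θ*y₂ = y₁ := by rw [hθy]; ring
        rw [e0] at hP
        have hkey := key y₁ _ _ hP hp
        have h1 : x₁ - b ≤ θ*(x₂-a) := by linarith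
        have h4 := mul_le_mul_of_nonneg_right h1 hy₂.le
        have e : (x₂-a)*(θ*y₂) = (x₂-a)*y₁ := by rw [hθy]
        linarith [h4, e]
      · set θ := y₂/y₁ with hθ_def
        have hθ0 : 0 ≤ θ := div_nonneg hy₂.le hy₁.le
        have hθ1 : θ ≤ 1 := (div_le_one hy₁).2 hle
        have hθy : θ * y₁ = y₂ := div_mul_cancel₀ y₂ hy₁.ne'
        have hQ := hseg b 0 x₁ y₁ hbA hp θ hθ0 hθ1
        have e0 : (1-θ)*(0:ℝ) + θ*y₁ = y₂ := by rw [hθy]; ring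
        rw [e0] at hQ
        have hkey := key y₂ _ _ hq hQ
        have h1 : θ*(x₁-b) ≤ x₂ - a := by linarith
        have h4 := mul_le_mul_of_nonneg_right h1 hy₁.le
        have e : θ*y₁*(x₁-b) = y₂*(x₁-b) := by rw [hθy]
        nlinarith [h4, e]
    · -- Case C : y₁ > 0, y₂ < 0 : (x₁-b)/y₁ ≤ (x₂-b)/y₂
      have e2 : (x₂-b)/y₂ = (b-x₂)/(-y₂) := by rw [div_neg]; ring
      rw [e2, div_le_div_iff₀ hy₁ (by linarith : (0:ℝ) < -y₂)]
      set θ := -y₂/(y₁-y₂) with hθ_def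
      have hd : (0:ℝ) < y₁ - y₂ := by linarith
      have hθ0 : 0 ≤ θ := div_nonneg (by linarith) hd.le
      have hθ1 : θ ≤ 1 := (div_le_one hd).2 (by linarith)
      have hθy : θ * (y₁-y₂) = -y₂ := div_mul_cancel₀ _ hd.ne'
      have hP := hseg x₂ y₂ x₁ y₁ hq hp θ hθ0 hθ1
      have e0 : (1-θ)*y₂ + θ*y₁ = 0 := by nlinarith [hθy]
      rw [e0] at hP
      have hc : (1-θ)*x₂ + θ*x₁ ≤ b := by
        have := (hS0eq ▸ hP : (1-θ)*x₂ + θ*x₁ ∈ Set.Icc a b)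
        exact this.2
      have h3 : θ*(x₁-b) ≤ (1-θ)*(b-x₂) := by linarith
      have h4 := mul_le_mul_of_nonneg_right h3 hd.le
      have e3 : θ*(y₁-y₂)*(x₁-b) = -y₂*(x₁-b) := by rw [hθy]
      have e4 : θ*(y₁-y₂)*(b-x₂) = -y₂*(b-x₂) := by rw [hθy]
      nlinarith [h4, e3, e4]
    · -- Case D : y₁ < 0, y₂ > 0 : (x₁-a)/y₁ ≤ (x₂-a)/y₂
      have e2 : (x₁-a)/y₁ = (a-x₁)/(-y₁) := by rw [div_neg]; ring
      rw [e2, div_le_div_iff₀ (by linarith : (0:ℝ) < -y₁) hy₂]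
      set θ := -y₁/(y₂-y₁) with hθ_def
      have hd : (0:ℝ) < y₂ - y₁ := by linarith
      have hθ0 : 0 ≤ θ := div_nonneg (by linarith) hd.le
      have hθ1 : θ ≤ 1 := (div_le_one hd).2 (by linarith)
      have hθy : θ * (y₂-y₁) = -y₁ := div_mul_cancel₀ _ hd.ne'
      have hP := hseg x₁ y₁ x₂ y₂ hp hq θ hθ0 hθ1
      have e0 : (1-θ)*y₁ + θ*y₂ = 0 := by nlinarith [hθy]
      rw [e0] at hP
      have hc : a ≤ (1-θ)*x₁ + θ*x₂ := by
        have := (hS0eq ▸ hP : (1-θ)*x₁ + θ*x₂ ∈ Set.Icc a b)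
        exact this.1
      have h3 : (1-θ)*(a-x₁) ≤ θ*(x₂-a) := by linarith
      have h4 := mul_le_mul_of_nonneg_right h3 hd.le
      have e3 : θ*(y₂-y₁)*(a-x₁) = -y₁*(a-x₁) := by rw [hθy]
      have e4 : θ*(y₂-y₁)*(x₂-a) = -y₁*(x₂-a) := by rw [hθy]
      nlinarith [h4, e3, e4]
    · -- Case B : y₁ < 0, y₂ < 0 : (x₁-a)/y₁ ≤ (x₂-b)/y₂
      have e1 : (x₁-a)/y₁ = (a-x₁)/(-y₁) := by rw [div_neg]; ring
      have e2 : (x₂-b)/y₂ = (b-x₂)/(-y₂) := by rw [div_neg]; ring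
      rw [e1, e2, div_le_div_iff₀ (by linarith : (0:ℝ) < -y₁) (by linarith : (0:ℝ) < -y₂)]
      rcases le_total y₂ y₁ with hle | hle
      · -- |y₁| ≤ |y₂|
        set θ := y₁/y₂ with hθ_def
        have hθ0 : 0 ≤ θ := by
          have := div_nonneg (neg_nonneg.2 hy₁.le) (neg_nonneg.2 hy₂.le)
          rwa [neg_div_neg_eq] at this
        have hθ1 : θ ≤ 1 := by
          rw [div_le_one_iff]
          right; right; exact ⟨hy₂, hle⟩
        have hθy : θ * y₂ = y₁ := div_mul_cancel₀ y₁ (by linarith : y₂ ≠ 0)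
        have hP := hseg b 0 x₂ y₂ hbA hq θ hθ0 hθ1
        have e0 : (1-θ)*(0:ℝ) + θ*y₂ = y₁ := by rw [hθy]; ring
        rw [e0] at hP
        have hkey := key y₁ _ _ hp hP
        have h1 : θ*(x₂-b) ≤ x₁ - a := by linarith
        have h4 := mul_le_mul_of_nonneg_right h1 (by linarith : (0:ℝ) ≤ -y₂)
        have e : θ*y₂*(x₂-b) = y₁*(x₂-b) := by rw [hθy]
        nlinarith [h4, e]
      · -- |y₂| ≤ |y₁|
        set θ := y₂/y₁ with hθ_def
        have hθ0 : 0 ≤ θ := by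
          have := div_nonneg (neg_nonneg.2 hy₂.le) (neg_nonneg.2 hy₁.le)
          rwa [neg_div_neg_eq] at this
        have hθ1 : θ ≤ 1 := by
          rw [div_le_one_iff]
          right; right; exact ⟨hy₁, hle⟩
        have hθy : θ * y₁ = y₂ := div_mul_cancel₀ y₂ (by linarith : y₁ ≠ 0)
        have hQ := hseg a 0 x₁ y₁ haA hp θ hθ0 hθ1
        have e0 : (1-θ)*(0:ℝ) + θ*y₁ = y₂ := by rw [hθy]; ring
        rw [e0] at hQ
        have hkey := key y₂ _ _ hQ hq
        have h1 : x₂ - b ≤ θ*(x₁-a) := by linarith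
        have h4 := mul_le_mul_of_nonneg_right h1 (by linarith : (0:ℝ) ≤ -y₁)
        have e : θ*y₁*(x₁-a) = y₂*(x₁-a) := by rw [hθy]
        nlinarith [h4, e]
  -- existence of a point with nonzero second coordinate
  have hwit : ∃ p : ℝ × ℝ, p ∈ A ∧ p.2 ≠ 0 := by
    rcases eq_or_ne z.2 0 with h | h
    · refine ⟨(z.1, z.2 + ε/2), interior_subset (hball ?_), by simp [h]; linarith⟩
      rw [Metric.mem_ball, Prod.dist_eq]
      rw [show z = (z.1, z.2) from rfl]
      simp only [Real.dist_eq]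
      have : |z.1 - z.1| = 0 := by simp
      rw [this]
      have : |z.2 + ε/2 - z.2| = ε/2 := by
        rw [show z.2 + ε/2 - z.2 = ε/2 by ring, abs_of_pos (by linarith)]
      rw [this]
      rw [max_eq_right (by linarith : (0:ℝ) ≤ ε/2)]
      linarith
    · exact ⟨z, interior_subset hz, h⟩
  obtain ⟨⟨x₀, y₀⟩, hp₀, hy₀⟩ := hwit
  simp only at hy₀
  have hLne : L.Nonempty := by
    rcases lt_or_gt_of_ne hy₀ with h | h
    · exact ⟨(x₀-a)/y₀, ⟨(x₀,y₀), hp₀, Or.inr ⟨h, rfl⟩⟩⟩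
    · exact ⟨(x₀-b)/y₀, ⟨(x₀,y₀), hp₀, Or.inl ⟨h, rfl⟩⟩⟩
  have hUne : U.Nonempty := by
    rcases lt_or_gt_of_ne hy₀ with h | h
    · exact ⟨(x₀-b)/y₀, ⟨(x₀,y₀), hp₀, Or.inr ⟨h, rfl⟩⟩⟩
    · exact ⟨(x₀-a)/y₀, ⟨(x₀,y₀), hp₀, Or.inl ⟨h, rfl⟩⟩⟩
  obtain ⟨u₀, hu₀⟩ := hUne
  have hbdd : BddAbove L := ⟨u₀, fun r hr => hLU r hr u₀ hu₀⟩
  set l := sSup L with hl_def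
  have hlb : ∀ r ∈ L, r ≤ l := fun r hr => le_csSup hbdd hr
  have hub : ∀ s ∈ U, l ≤ s := fun s hs => csSup_le hLne (fun r hr => hLU r hr s hs)
  -- main bound
  have hbound : ∀ p : ℝ × ℝ, p ∈ A → a ≤ p.1 - l * p.2 ∧ p.1 - l * p.2 ≤ b := by
    rintro ⟨x, y⟩ hp
    simp only
    rcases lt_trichotomy y 0 with hy | hy | hy
    · have h1 : (x-a)/y ≤ l := hlb _ ⟨(x,y), hp, Or.inr ⟨hy, rfl⟩⟩
      have h2 : l ≤ (x-b)/y := hub _ ⟨(x,y), hp, Or.inr ⟨hy, rfl⟩⟩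
      have h1' : l * y ≤ x - a := by
        rw [div_le_iff_of_neg hy] at h1; linarith
      have h2' : x - b ≤ l * y := by
        rw [le_div_iff_of_neg hy] at h2; linarith
      constructor <;> linarith
    · subst hy
      have : x ∈ Set.Icc a b := hS0eq ▸ hp
      constructor <;> [linarith [this.1]; linarith [this.2]]
    · have h1 : (x-b)/y ≤ l := hlb _ ⟨(x,y), hp, Or.inl ⟨hy, rfl⟩⟩
      have h2 : l ≤ (x-a)/y := hub _ ⟨(x,y), hp, Or.inl ⟨hy, rfl⟩⟩
      have h1' : x - b ≤ l * y := by
        rw [div_le_iff₀ hy] at h1; linarith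
      have h2' : l * y ≤ x - a := by
        rw [le_div_iff₀ hy] at h2; linarith
      constructor <;> linarith
  -- the projection
  refine ⟨{ toFun := fun p => (p.1 - l * p.2, 0),
            map_add' := by intro p q; simp [Prod.ext_iff]; ring,
            map_smul' := by intro c p; simp [Prod.ext_iff, smul_eq_mul]; ring }, ?_, ?_⟩
  · ext ⟨u, v⟩
    constructor
    · rintro ⟨⟨x, y⟩, h⟩
      simp only [LinearMap.coe_mk, AddHom.coe_mk] at h
      rw [Prod.ext_iff] at h
      simp only [Set.mem_setOf_eq]
      exact h.2.symm
    · intro hv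
      simp only [Set.mem_setOf_eq] at hv
      refine ⟨(u, 0), ?_⟩
      simp only [LinearMap.coe_mk, AddHom.coe_mk]
      rw [Prod.ext_iff]
      exact ⟨by simp, hv.symm⟩
  · ext ⟨u, v⟩
    constructor
    · rintro ⟨⟨x, y⟩, hxy, h⟩
      simp only [LinearMap.coe_mk, AddHom.coe_mk] at h
      rw [Prod.ext_iff] at h
      obtain ⟨h1, h2⟩ := h
      simp only at h1 h2
      refine ⟨by simp [← h2], ?_⟩
      have hb' := hbound (x, y) hxy
      have : x - l * y ∈ Set.Icc a b := ⟨hb'.1, hb'.2⟩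
      have hmem : (x - l * y, (0:ℝ)) ∈ A := by
        rw [← hS0eq] at this
        exact this
      rw [show ((u:ℝ), v) = (x - l*y, (0:ℝ)) from Prod.ext h1.symm h2.symm]
      exact hmem
    · rintro ⟨hv, hA'⟩
      simp only [Set.mem_setOf_eq] at hv
      refine ⟨(u, v), hA', ?_⟩
      simp only [LinearMap.coe_mk, AddHom.coe_mk]
      rw [Prod.ext_iff]
      subst hv
      exact ⟨by simp, rfl⟩
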